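/- (Proposition 6, position relative to the diagonal) Let K = 2n+1 be odd and let P_F, P_M ∈ (0,1) satisfy the robustness condition B(k; K, P_F) + B(k; K, 1-P_M) = 1. If 0 ≤ k ≤ n-1 then P_M > P_F, and if n+1 ≤ k ≤ K-1 then P_M < P_F. -/

import Mathlib

/-- Binomial cumulative distribution function: probability of at most `k` successes out of
`K` trials, each with success probability `p`. -/
noncomputable def binCdf (K k : ℕ) (p : ℝ) : ℝ :=
  ∑ i ∈ Finset.range (k + 1), (K.choose i : ℝ) * p ^ i * (1 - p) ^ (K - i)

private noncomputable def binA (K i : ℕ) (p : ℝ) : ℝ :=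
  (i : ℝ) * (K.choose i : ℝ) * p ^ (i - 1) * (1 - p) ^ (K - i)

private lemma term_hasDerivAt (K i : ℕ) (hi : i < K) (p : ℝ) :
    HasDerivAt (fun q : ℝ => (K.choose i : ℝ) * q ^ i * (1 - q) ^ (K - i))
      (binA K i p - binA K (i + 1) p) p := by
  have h1 : HasDerivAt (fun q : ℝ => (K.choose i : ℝ) * q ^ i)
      ((K.choose i : ℝ) * ((i : ℝ) * p ^ (i - 1))) p :=
    (hasDerivAt_pow i p).const_mul _
  have h2 : HasDerivAt (fun q : ℝ => (1 - q) ^ (K - i))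
      (((K - i : ℕ) : ℝ) * (1 - p) ^ (K - i - 1) * (-1)) p := by
    have hsub : HasDerivAt (fun q : ℝ => 1 - q) (-1) p := (hasDerivAt_id p).const_sub 1
    exact (hasDerivAt_pow (K - i) (1 - p)).comp p hsub
  have h := h1.fun_mul h2
  refine h.congr_deriv ?_
  have hc : ((i + 1 : ℕ) : ℝ) * (K.choose (i + 1) : ℝ) = (K.choose i : ℝ) * ((K - i : ℕ) : ℝ) := by
    rw [← Nat.cast_mul, ← Nat.cast_mul, mul_comm (i + 1 : ℕ), Nat.choose_succ_right_eq]
  have hKi : K - (i + 1) = K - i - 1 := by omega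
  simp only [binA, Nat.add_sub_cancel, hKi]
  rw [mul_assoc ((i + 1 : ℕ) : ℝ), mul_assoc, ← mul_assoc ((i + 1 : ℕ) : ℝ), hc]
  push_cast
  ring

private lemma binCdf_hasDerivAt (K k : ℕ) (hk : k < K) (p : ℝ) :
    HasDerivAt (binCdf K k) (-binA K (k + 1) p) p := by
  have h : HasDerivAt (fun q => ∑ i ∈ Finset.range (k + 1),
        (K.choose i : ℝ) * q ^ i * (1 - q) ^ (K - i))
      (∑ i ∈ Finset.range (k + 1), (binA K i p - binA K (i + 1) p)) p := by
    apply HasDerivAt.fun_sum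
    intro i hi
    exact term_hasDerivAt K i (by simp at hi; omega) p
  have hsum : ∑ i ∈ Finset.range (k + 1), (binA K i p - binA K (i + 1) p)
      = binA K 0 p - binA K (k + 1) p := Finset.sum_range_sub' (fun i => binA K i p) (k + 1)
  have h0 : binA K 0 p = 0 := by simp [binA]
  rw [hsum, h0, zero_sub] at h
  exact h

private lemma binCdf_antitoneOn (K k : ℕ) (hk : k < K) :
    AntitoneOn (binCdf K k) (Set.Icc (0:ℝ) 1) := by
  apply antitoneOn_of_deriv_nonpos (convex_Icc 0 1)
  · exact fun x _ => ((binCdf_hasDerivAt K k hk x).continuousAt).continuousWithinAt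
  · exact fun x _ => ((binCdf_hasDerivAt K k hk x).differentiableAt).differentiableWithinAt
  · intro x hx
    rw [interior_Icc, Set.mem_Ioo] at hx
    rw [(binCdf_hasDerivAt K k hk x).deriv]
    have h1 : (0:ℝ) ≤ x ^ (k + 1 - 1) := pow_nonneg hx.1.le _
    have h2 : (0:ℝ) ≤ (1 - x) ^ (K - (k + 1)) := pow_nonneg (by linarith [hx.2]) _
    have h3 : (0:ℝ) ≤ ((k + 1 : ℕ) : ℝ) * (K.choose (k + 1) : ℝ) := by positivity
    simp only [binA]
    have := mul_nonneg (mul_nonneg h3 h1) h2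
    linarith

private lemma binCdf_strict_lt (K j m : ℕ) (hjm : j < m) (hm : m ≤ K) {p : ℝ}
    (hp : p ∈ Set.Ioo (0:ℝ) 1) : binCdf K j p < binCdf K m p := by
  apply Finset.sum_lt_sum_of_subset (Finset.range_subset_range.2 (by omega))
    (i := m) (by simp) (by simp; omega)
  · have : (0:ℝ) < (K.choose m : ℝ) := by
      exact_mod_cast Nat.choose_pos hm
    have h1 : (0:ℝ) < p ^ m := pow_pos hp.1 _
    have h2 : (0:ℝ) < (1 - p) ^ (K - m) := pow_pos (by linarith [hp.2]) _
    positivity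
  · intro i _ _
    have h1 : (0:ℝ) ≤ p ^ i := pow_nonneg hp.1.le _
    have h2 : (0:ℝ) ≤ (1 - p) ^ (K - i) := pow_nonneg (by linarith [hp.2]) _
    positivity

private lemma binCdf_symm (K k : ℕ) (hk : k < K) (p : ℝ) :
    binCdf K k p + binCdf K (K - 1 - k) (1 - p) = 1 := by
  have key : binCdf K (K - 1 - k) (1 - p)
      = ∑ i ∈ Finset.Ico (k + 1) (K + 1), (K.choose i : ℝ) * p ^ i * (1 - p) ^ (K - i) := by
    unfold binCdf
    have hrw : K - 1 - k + 1 = K - k := by omega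
    rw [hrw]
    apply Finset.sum_nbij' (fun a => K - a) (fun b => K - b)
    · intro a ha
      simp only [Finset.mem_range] at ha
      simp only [Finset.mem_Ico]
      omega
    · intro b hb
      simp only [Finset.mem_Ico] at hb
      simp only [Finset.mem_range]
      omega
    · intro a ha; simp only [Finset.mem_range] at ha; omega
    · intro b hb; simp only [Finset.mem_Ico] at hb; omega
    · intro a ha
      simp only [Finset.mem_range] at ha
      have h1 : K.choose (K - a) = K.choose a := Nat.choose_symm (by omega)
      have h2 : K - (K - a) = a := by omega
      rw [h1, h2]
      have h3 : (1 : ℝ) - (1 - p) = p := by ring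
      rw [h3]
      ring
  have total : ∑ i ∈ Finset.range (K + 1), (K.choose i : ℝ) * p ^ i * (1 - p) ^ (K - i) = 1 := by
    have h1 := add_pow p (1 - p) K
    simp only [add_sub_cancel, one_pow] at h1
    calc ∑ i ∈ Finset.range (K + 1), (K.choose i : ℝ) * p ^ i * (1 - p) ^ (K - i)
        = ∑ i ∈ Finset.range (K + 1), p ^ i * (1 - p) ^ (K - i) * (K.choose i : ℝ) := by
          apply Finset.sum_congr rfl; intros; ring
      _ = 1 := h1.symm
  have split : binCdf K k p + ∑ i ∈ Finset.Ico (k + 1) (K + 1),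
      (K.choose i : ℝ) * p ^ i * (1 - p) ^ (K - i)
      = ∑ i ∈ Finset.range (K + 1), (K.choose i : ℝ) * p ^ i * (1 - p) ^ (K - i) := by
    unfold binCdf
    rw [Finset.range_eq_Ico, Finset.range_eq_Ico]
    exact Finset.sum_Ico_consecutive _ (by omega) (by omega)
  rw [key, split, total]

/-- Proposition 6, position relative to the diagonal: for odd `K = 2n+1`
and `P_F, P_M ∈ (0,1)` satisfying `B(k; K, P_F) + B(k; K, 1-P_M) = 1`: if `k ≤ n-1`
then `P_M > P_F`, and if `n+1 ≤ k ≤ K-1` then `P_M < P_F`. -/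
theorem fusion_curve_vs_diagonal (n k : ℕ) (PF PM : ℝ)
    (hPF : PF ∈ Set.Ioo (0:ℝ) 1) (hPM : PM ∈ Set.Ioo (0:ℝ) 1)
    (h : binCdf (2 * n + 1) k PF + binCdf (2 * n + 1) k (1 - PM) = 1) :
    (k + 1 ≤ n → PF < PM) ∧ (n + 1 ≤ k → k + 1 ≤ 2 * n + 1 → PM < PF) := by
  constructor
  · intro hkn
    have hsym := binCdf_symm (2 * n + 1) (2 * n - k) (by omega) PM
    have heq : 2 * n + 1 - 1 - (2 * n - k) = k := by omega
    rw [heq] at hsym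
    have hEq : binCdf (2 * n + 1) k PF = binCdf (2 * n + 1) (2 * n - k) PM := by linarith
    have hlt : binCdf (2 * n + 1) k PM < binCdf (2 * n + 1) (2 * n - k) PM :=
      binCdf_strict_lt _ k (2 * n - k) (by omega) (by omega) hPM
    by_contra hc
    push_neg at hc
    have := binCdf_antitoneOn (2 * n + 1) k (by omega)
      ⟨hPM.1.le, hPM.2.le⟩ ⟨hPF.1.le, hPF.2.le⟩ hc
    linarith
  · intro hnk hkK
    have hsym := binCdf_symm (2 * n + 1) (2 * n - k) (by omega) PM
    have heq : 2 * n + 1 - 1 - (2 * n - k) = k := by omega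
    rw [heq] at hsym
    have hEq : binCdf (2 * n + 1) k PF = binCdf (2 * n + 1) (2 * n - k) PM := by linarith
    have hlt : binCdf (2 * n + 1) (2 * n - k) PM < binCdf (2 * n + 1) k PM :=
      binCdf_strict_lt _ (2 * n - k) k (by omega) (by omega) hPM
    by_contra hc
    push_neg at hc
    have := binCdf_antitoneOn (2 * n + 1) k (by omega)
      ⟨hPF.1.le, hPF.2.le⟩ ⟨hPM.1.le, hPM.2.le⟩ hc
    linarith
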